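/- (Quadratic-cost martingale rewards) Let Φ be a finite set, p_h, p_l strictly positive pmfs on Φ, δ ∈ (0,1), and suppose real numbers ν_t, ν^l_t, Δ_t > 0, continuation utilities V_t(h), V_t(l) (indexed by signal histories) satisfy: (i) the low-type continuation is constant: V_{t}(l-branch) = ν^l_t · Σ_{τ=t}^T δ^{τ−t}; (ii) the binding incentive constraint V_t(l-branch) = ν_t + δ Σ_φ p_l(φ)[π_lh V_{t+1}(φ,h) + π_ll V_{t+1}(φ,l)] − Δ_t; (iii) continuation type-reward: V_{t+1}(φ,h) > V_{t+1}(φ,l) for all φ; (iv) martingale property ν_t = Σ_φ p_h(φ)[π_hh ν_{t+1}(φ) + π_hl ν^l_{t+1}(φ)] and its implied identity ν_t · Σ_{τ=t}^T δ^{τ−t} = ν_t + δ Σ_φ p_h(φ)[π_hh V_{t+1}(φ,h) + π_hl V_{t+1}(φ,l)]; and (v) p_l weighting versus p_h weighting: Σ_φ p_l(φ)[π_lh V_{t+1}(φ,h)+π_ll V_{t+1}(φ,l)] ≤ Σ_φ p_h(φ)[π_lh V_{t+1}(φ,h)+π_ll V_{t+1}(φ,l)] with persistence π_hh > π_lh.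 Then ν^l_t < ν_t. -/

import Mathlib

/-- Key inequality in the proof of Proposition 5 (quadratic-cost case): the
flow utility after a first low-type announcement in period `t` is strictly
below the flow utility after another high-type realization. -/
theorem low_flow_below_high_flow
    {Φ : Type*} [Fintype Φ] [Nonempty Φ]
    (ph pl : Φ → ℝ)
    (hph : ∀ φ, 0 < ph φ) (hpl : ∀ φ, 0 < pl φ)
    (hs1 : ∑ φ, ph φ = 1) (hs2 : ∑ φ, pl φ = 1)
    (δ : ℝ) (hδ : δ ∈ Set.Ioo (0 : ℝ) 1)
    (t T : ℕ) (ht : 1 ≤ t) (htT : t ≤ T)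
    (πhh πhl πlh πll : ℝ)
    (hπ : 0 ≤ πlh ∧ 0 ≤ πll ∧ 0 ≤ πhh ∧ 0 ≤ πhl)
    (hsumh : πhh + πhl = 1) (hsuml : πlh + πll = 1)
    (hpers : πlh < πhh)
    (νt νlt Δt : ℝ) (hΔt : 0 < Δt)
    (Vl : ℝ) (Vh1 Vl1 νt1 νlt1 : Φ → ℝ)
    -- (i) low-branch continuation is a constant flow:
    (hi : Vl = νlt * ∑ τ ∈ Finset.Icc t T, δ ^ (τ - t))
    -- (ii) binding period-t incentive constraint:
    (hii : Vl = νt + δ * (∑ φ, pl φ * (πlh * Vh1 φ + πll * Vl1 φ)) - Δt)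
    -- (iii) continuation type reward (CTM):
    (hiii : ∀ φ, Vl1 φ < Vh1 φ)
    -- (iv) martingale property of flow utilities and its implied identity:
    (hiv1 : νt = ∑ φ, ph φ * (πhh * νt1 φ + πhl * νlt1 φ))
    (hiv2 : νt * ∑ τ ∈ Finset.Icc t T, δ ^ (τ - t) =
      νt + δ * (∑ φ, ph φ * (πhh * Vh1 φ + πhl * Vl1 φ)))
    -- (v) signal monotonicity (CSM):
    (hv : (∑ φ, pl φ * (πlh * Vh1 φ + πll * Vl1 φ)) ≤
      ∑ φ, ph φ * (πlh * Vh1 φ + πll * Vl1 φ)) :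
    νlt < νt := by
  set S := ∑ τ ∈ Finset.Icc t T, δ ^ (τ - t) with hS
  have hSpos : 0 < S := by
    apply Finset.sum_pos
    · intro τ _; exact pow_pos hδ.1 _
    · exact ⟨t, Finset.mem_Icc.mpr ⟨le_refl t, htT⟩⟩
  have hstep : ∀ φ, πlh * Vh1 φ + πll * Vl1 φ ≤ πhh * Vh1 φ + πhl * Vl1 φ := by
    intro φ
    have h1 : πll - πhl = πhh - πlh := by linarith
    have h2 : 0 ≤ (πhh - πlh) * (Vh1 φ - Vl1 φ) :=
      mul_nonneg (by linarith) (by linarith [hiii φ])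
    have h3 : πhh * Vh1 φ + πhl * Vl1 φ - (πlh * Vh1 φ + πll * Vl1 φ)
        = (πhh - πlh) * (Vh1 φ - Vl1 φ) := by linear_combination -(Vl1 φ) * h1
    linarith
  have hsum2 : (∑ φ, ph φ * (πlh * Vh1 φ + πll * Vl1 φ)) ≤
      ∑ φ, ph φ * (πhh * Vh1 φ + πhl * Vl1 φ) := by
    apply Finset.sum_le_sum
    intro φ _
    exact mul_le_mul_of_nonneg_left (hstep φ) (hph φ).le
  have key : νlt * S < νt * S := by
    rw [← hi, hii, hiv2]
    have := mul_le_mul_of_nonneg_left (le_trans hv hsum2) hδ.1.le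
    linarith
  exact lt_of_mul_lt_mul_right (by simpa [mul_comm] using key) hSpos.le
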